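/- Under the assumptions that a : [0,1] → ℝ is Lipschitz (W^{1,∞}), a(x₀)=0 for some x₀ ∈ (0,1), a > 0 on [0,1]\{x₀}, and (x-x₀)a'(x) ≤ K a(x) a.e. with K ∈ [1,2), the function 1/√a is integrable on (0,1) but 1/a is not integrable on (0,1). -/

import Mathlib

open MeasureTheory Set intervalIntegral

lemma lip_ftc {f : ℝ → ℝ} {M : NNReal} (hf : LipschitzWith M f) {c d : ℝ} (hcd : c ≤ d) :
    f d - f c = ∫ x in c..d, deriv f x := by
  have hcont : Continuous f := hf.continuous
  have hint : ∀ a b : ℝ, IntervalIntegrable f volume a b := fun a b =>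
    hcont.intervalIntegrable a b
  set Φ : ℝ → ℝ := fun x => ∫ t in c..x, f t with hΦ
  have hΦd : ∀ x : ℝ, HasDerivAt Φ (f x) x := fun x =>
    intervalIntegral.integral_hasDerivAt_right (hint c x)
      hcont.stronglyMeasurable.stronglyMeasurableAtFilter hcont.continuousAt
  set h : ℕ → ℝ := fun n => (1:ℝ)/(n+1) with hh
  have hhpos : ∀ n, 0 < h n := fun n => by positivity
  have hh0 : Filter.Tendsto h Filter.atTop (nhds 0) := tendsto_one_div_add_atTop_nhds_zero_nat
  set F : ℕ → ℝ → ℝ := fun n x => (f (x + h n) - f x) / h n with hF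
  have hFint : ∀ n, ∫ x in c..d, F n x = ((Φ (d + h n) - Φ d) - (Φ (c + h n) - Φ c)) / h n := by
    intro n
    have hint' : IntervalIntegrable (fun x => f (x + h n)) volume c d :=
      (hcont.comp (continuous_add_right _)).intervalIntegrable _ _
    have h1 : ∫ x in c..d, f (x + h n) = Φ (d + h n) - Φ (c + h n) := by
      rw [intervalIntegral.integral_comp_add_right]
      exact (intervalIntegral.integral_interval_sub_left (hint c (d + h n)) (hint c (c + h n))).symm
    have h2 : ∫ x in c..d, f x = Φ d - Φ c := by
      simp [hΦ]
    calc ∫ x in c..d, F n x = (∫ x in c..d, (f (x + h n) - f x)) / h n := by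
          rw [hF, intervalIntegral.integral_div]
      _ = ((Φ (d + h n) - Φ d) - (Φ (c + h n) - Φ c)) / h n := by
          rw [intervalIntegral.integral_sub hint' (hint c d), h1, h2]; ring_nf
  have key : ∀ (g : ℝ → ℝ) (x g' : ℝ), HasDerivAt g g' x →
      Filter.Tendsto (fun n => (g (x + h n) - g x) / h n) Filter.atTop (nhds g') := by
    intro g x g' hg
    have hslope := hasDerivAt_iff_tendsto_slope.1 hg
    have htend : Filter.Tendsto (fun n => x + h n) Filter.atTop (nhdsWithin x {x}ᶜ) := by
      apply tendsto_nhdsWithin_of_tendsto_nhds_of_eventually_within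
      · simpa using (tendsto_const_nhds.add hh0)
      · filter_upwards with n
        simp only [mem_compl_iff, mem_singleton_iff]
        have := hhpos n; intro hcon; nlinarith [hcon]
    exact Filter.Tendsto.congr
      (fun n => by simp [Function.comp_def, slope_def_field, add_sub_cancel_left])
      (hslope.comp htend)
  have hslopelim : ∀ x : ℝ, Filter.Tendsto (fun n => (Φ (x + h n) - Φ x) / h n)
      Filter.atTop (nhds (f x)) := fun x => key Φ x (f x) (hΦd x)
  have hlim1 : Filter.Tendsto (fun n => ∫ x in c..d, F n x) Filter.atTop (nhds (f d - f c)) := by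
    have : Filter.Tendsto (fun n => ((Φ (d + h n) - Φ d) - (Φ (c + h n) - Φ c)) / h n)
        Filter.atTop (nhds (f d - f c)) := by
      have := (hslopelim d).sub (hslopelim c)
      simpa [sub_div] using this
    simpa [hFint] using this
  have hbound : ∀ n, ∀ᵐ x ∂(volume.restrict (Ioc c d)), ‖F n x‖ ≤ (M : ℝ) := by
    intro n
    filter_upwards with x
    have := hf.dist_le_mul (x + h n) x
    rw [Real.dist_eq, Real.dist_eq] at this
    have hpn := hhpos n
    rw [hF]
    simp only [Real.norm_eq_abs, abs_div, abs_of_pos hpn]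
    rw [div_le_iff₀ hpn]
    simpa [abs_of_pos hpn] using this
  have hae : ∀ᵐ x ∂(volume.restrict (Ioc c d)),
      Filter.Tendsto (fun n => F n x) Filter.atTop (nhds (deriv f x)) := by
    have hdiff : ∀ᵐ x ∂(volume : Measure ℝ), DifferentiableAt ℝ f x := hf.ae_differentiableAt
    refine ae_restrict_of_ae ?_
    filter_upwards [hdiff] with x hx
    exact key f x (deriv f x) hx.hasDerivAt
  have hFmeas : ∀ n, AEStronglyMeasurable (F n) (volume.restrict (Ioc c d)) := by
    intro n
    exact (((hcont.comp (continuous_add_right _)).sub hcont).div_const _).aestronglyMeasurable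
  have hlim2 : Filter.Tendsto (fun n => ∫ x in Ioc c d, F n x) Filter.atTop
      (nhds (∫ x in Ioc c d, deriv f x)) := by
    exact MeasureTheory.tendsto_integral_of_dominated_convergence (fun _ => (M : ℝ))
      hFmeas (integrable_const _) hbound hae
  have heq1 : ∀ n, ∫ x in Ioc c d, F n x = ∫ x in c..d, F n x := fun n =>
    (intervalIntegral.integral_of_le hcd).symm
  have heq2 : ∫ x in Ioc c d, deriv f x = ∫ x in c..d, deriv f x :=
    (intervalIntegral.integral_of_le hcd).symm
  rw [← heq2]
  refine tendsto_nhds_unique hlim1 ?_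
  simpa [heq1] using hlim2

lemma lipOn_deriv_nonpos {f : ℝ → ℝ} {M : NNReal} {c d : ℝ} (hcd : c ≤ d)
    (hf : LipschitzOnWith M f (Set.Icc c d))
    (hder : ∀ᵐ x ∂(volume.restrict (Ioo c d)), deriv f x ≤ 0) :
    f d ≤ f c := by
  obtain ⟨F, hF, hFeq⟩ := hf.extend_real
  have hderEq : ∀ x ∈ Ioo c d, deriv F x = deriv f x := by
    intro x hx
    apply Filter.EventuallyEq.deriv_eq
    filter_upwards [Ioo_mem_nhds hx.1 hx.2] with y hy
    exact (hFeq (Ioo_subset_Icc_self hy)).symm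
  have h1 : F d - F c = ∫ x in c..d, deriv F x := lip_ftc hF hcd
  have h2 : ∫ x in c..d, deriv F x ≤ 0 := by
    rw [intervalIntegral.integral_of_le hcd, MeasureTheory.integral_Ioc_eq_integral_Ioo]
    apply MeasureTheory.integral_nonpos_of_ae
    have hmem : ∀ᵐ x ∂(volume.restrict (Ioo c d)), x ∈ Ioo c d :=
      ae_restrict_mem measurableSet_Ioo
    filter_upwards [hder, hmem] with x hx hxm
    rw [Pi.zero_apply, hderEq x hxm]
    exact hx
  have := h1 ▸ h2
  have hc : f c = F c := hFeq (left_mem_Icc.2 hcd)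
  have hd : f d = F d := hFeq (right_mem_Icc.2 hcd)
  rw [hc, hd]; linarith

lemma lipOn_deriv_nonneg {f : ℝ → ℝ} {M : NNReal} {c d : ℝ} (hcd : c ≤ d)
    (hf : LipschitzOnWith M f (Set.Icc c d))
    (hder : ∀ᵐ x ∂(volume.restrict (Ioo c d)), 0 ≤ deriv f x) :
    f c ≤ f d := by
  obtain ⟨F, hF, hFeq⟩ := hf.extend_real
  have hderEq : ∀ x ∈ Ioo c d, deriv F x = deriv f x := by
    intro x hx
    apply Filter.EventuallyEq.deriv_eq
    filter_upwards [Ioo_mem_nhds hx.1 hx.2] with y hy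
    exact (hFeq (Ioo_subset_Icc_self hy)).symm
  have h1 : F d - F c = ∫ x in c..d, deriv F x := lip_ftc hF hcd
  have h2 : 0 ≤ ∫ x in c..d, deriv F x := by
    rw [intervalIntegral.integral_of_le hcd, MeasureTheory.integral_Ioc_eq_integral_Ioo]
    apply MeasureTheory.integral_nonneg_of_ae
    have hmem : ∀ᵐ x ∂(volume.restrict (Ioo c d)), x ∈ Ioo c d :=
      ae_restrict_mem measurableSet_Ioo
    filter_upwards [hder, hmem] with x hx hxm
    rw [Pi.zero_apply, hderEq x hxm]
    exact hx
  have := h1 ▸ h2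
  have hc : f c = F c := hFeq (left_mem_Icc.2 hcd)
  have hd : f d = F d := hFeq (right_mem_Icc.2 hcd)
  rw [hc, hd]; linarith

lemma lipOnWith_mul {f g : ℝ → ℝ} {s : Set ℝ} {Kf Kg : NNReal} {A B : ℝ}
    (hf : LipschitzOnWith Kf f s) (hg : LipschitzOnWith Kg g s)
    (hA : ∀ x ∈ s, |f x| ≤ A) (hB : ∀ x ∈ s, |g x| ≤ B) :
    ∃ C : NNReal, LipschitzOnWith C (fun x => f x * g x) s := by
  refine ⟨A.toNNReal * Kg + B.toNNReal * Kf, ?_⟩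
  rw [lipschitzOnWith_iff_dist_le_mul]
  intro x hx y hy
  have hfd := hf.dist_le_mul x hx y hy
  have hgd := hg.dist_le_mul x hx y hy
  rw [Real.dist_eq] at *
  have hA0 : 0 ≤ A := le_trans (abs_nonneg _) (hA x hx)
  have hB0 : 0 ≤ B := le_trans (abs_nonneg _) (hB y hy)
  have key : |f x * g x - f y * g y| ≤ |f x| * |g x - g y| + |g y| * |f x - f y| := by
    calc |f x * g x - f y * g y| = |f x * (g x - g y) + g y * (f x - f y)| := by ring_nf
      _ ≤ |f x * (g x - g y)| + |g y * (f x - f y)| := abs_add_le _ _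
      _ = |f x| * |g x - g y| + |g y| * |f x - f y| := by rw [abs_mul, abs_mul]
  have h1 : |f x| * |g x - g y| ≤ A * (Kg * |x - y|) :=
    mul_le_mul (hA x hx) hgd (abs_nonneg _) hA0
  have h2 : |g y| * |f x - f y| ≤ B * (Kf * |x - y|) :=
    mul_le_mul (hB y hy) hfd (abs_nonneg _) hB0
  have hcoe : ((A.toNNReal * Kg + B.toNNReal * Kf : NNReal) : ℝ) = A * Kg + B * Kf := by
    push_cast
    rw [Real.coe_toNNReal _ hA0, Real.coe_toNNReal _ hB0]
  rw [hcoe]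
  calc |f x * g x - f y * g y| ≤ A * (Kg * |x - y|) + B * (Kf * |x - y|) := by linarith
    _ = (A * Kg + B * Kf) * |x - y| := by ring

lemma lower_right (a : ℝ → ℝ) (x₀ K : ℝ) (L : NNReal)
    (hx₀ : x₀ ∈ Set.Ioo (0:ℝ) 1)
    (hLip : LipschitzOnWith L a (Set.Icc 0 1))
    (hadiff : ∀ᵐ t ∂(volume.restrict (Set.Ioo (0:ℝ) 1)), DifferentiableAt ℝ a t)
    (hK1 : 0 < K) (ha0 : a x₀ = 0)
    (hineq : ∀ᵐ x ∂(volume.restrict (Set.Icc (0:ℝ) 1)),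
      (x - x₀) * deriv a x ≤ K * a x) :
    ∀ x ∈ Set.Ioc x₀ 1, a 1 * (1 - x₀) ^ (-K) * (x - x₀) ^ K ≤ a x := by
  intro x hx
  have hxx₀ : 0 < x - x₀ := sub_pos.2 hx.1
  have hx0 : 0 < x := lt_trans hx₀.1 hx.1
  set φ : ℝ → ℝ := fun t => (t - x₀) ^ (-K) with hφ
  set g : ℝ → ℝ := fun t => a t * φ t with hg
  have hφd : ∀ t, x₀ < t → HasDerivAt φ (-K * (t - x₀) ^ (-K - 1)) t := by
    intro t ht
    have h1 : HasDerivAt (fun s => s - x₀) 1 t := (hasDerivAt_id t).sub_const x₀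
    have := h1.rpow_const (p := -K) (Or.inl (ne_of_gt (sub_pos.2 ht)))
    simpa using this
  have hsub1 : Set.Icc x 1 ⊆ Set.Icc 0 1 := Icc_subset_Icc hx0.le le_rfl
  have hφbound : ∀ t ∈ Set.Icc x 1, (t - x₀) ^ (-K - 1) ≤ (x - x₀) ^ (-K - 1) := by
    intro t ht
    exact Real.rpow_le_rpow_of_nonpos hxx₀
      (by linarith [ht.1]) (by linarith)
  have hφlip : LipschitzOnWith ⟨K * (x - x₀) ^ (-K - 1), by positivity⟩ φ (Set.Icc x 1) := by
    apply Convex.lipschitzOnWith_of_nnnorm_hasDerivWithin_le (convex_Icc x 1)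
      (f' := fun t => -K * (t - x₀) ^ (-K - 1))
    · intro t ht
      exact (hφd t (lt_of_lt_of_le hx.1 ht.1)).hasDerivWithinAt
    · intro t ht
      refine NNReal.coe_le_coe.1 ?_
      show ‖-K * (t - x₀) ^ (-K - 1)‖ ≤ K * (x - x₀) ^ (-K - 1)
      rw [Real.norm_eq_abs, abs_mul,
        abs_neg, abs_of_pos hK1, abs_of_pos (Real.rpow_pos_of_pos (by linarith [ht.1]) _)]
      exact mul_le_mul_of_nonneg_left (hφbound t ht) hK1.le
  have haA : ∀ t ∈ Set.Icc x 1, |a t| ≤ (L : ℝ) := by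
    intro t ht
    have := hLip.dist_le_mul t (hsub1 ht) x₀ (Ioo_subset_Icc_self hx₀)
    rw [Real.dist_eq, Real.dist_eq, ha0, sub_zero] at this
    have habs : |t - x₀| ≤ 1 := by
      rw [abs_le]
      constructor <;> [nlinarith [ht.1, ht.2, hx₀.1, hx₀.2]; nlinarith [ht.1, ht.2, hx₀.1, hx₀.2]]
    nlinarith [this, habs, L.coe_nonneg]
  have hφB : ∀ t ∈ Set.Icc x 1, |φ t| ≤ (x - x₀) ^ (-K) := by
    intro t ht
    rw [hφ, abs_of_pos (Real.rpow_pos_of_pos (by linarith [ht.1]) _)]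
    exact Real.rpow_le_rpow_of_nonpos hxx₀ (by linarith [ht.1]) (by linarith)
  obtain ⟨C, hC⟩ := lipOnWith_mul (hLip.mono hsub1) hφlip haA hφB
  have hder : ∀ᵐ t ∂(volume.restrict (Set.Ioo x 1)), deriv g t ≤ 0 := by
    have hi' : ∀ᵐ t ∂(volume.restrict (Set.Ioo x 1)), (t - x₀) * deriv a t ≤ K * a t :=
      ae_restrict_of_ae_restrict_of_subset (Ioo_subset_Icc_self.trans hsub1) hineq
    have hd' : ∀ᵐ t ∂(volume.restrict (Set.Ioo x 1)), DifferentiableAt ℝ a t :=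
      ae_restrict_of_ae_restrict_of_subset (Ioo_subset_Ioo hx0.le le_rfl) hadiff
    filter_upwards [hi', hd', ae_restrict_mem measurableSet_Ioo] with t ht1 ht2 htm
    have htx₀ : x₀ < t := lt_trans hx.1 htm.1
    have htb : 0 < t - x₀ := sub_pos.2 htx₀
    have hdg : HasDerivAt g (deriv a t * φ t + a t * (-K * (t - x₀) ^ (-K - 1))) t :=
      ht2.hasDerivAt.mul (hφd t htx₀)
    rw [hdg.deriv]
    have key : deriv a t * φ t + a t * (-K * (t - x₀) ^ (-K - 1)) =
        (t - x₀) ^ (-K - 1) * ((t - x₀) * deriv a t - K * a t) := by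
      have h2 : φ t = (t - x₀) ^ (-K - 1) * (t - x₀) := by
        rw [hφ]
        rw [← Real.rpow_add_one (ne_of_gt htb) (-K - 1)]
        norm_num
      rw [h2]; ring
    rw [key]
    exact mul_nonpos_of_nonneg_of_nonpos (Real.rpow_nonneg htb.le _) (by linarith)
  have hg1x : g 1 ≤ g x := lipOn_deriv_nonpos hx.2 hC hder
  have hgx : g x = a x * (x - x₀) ^ (-K) := rfl
  have hg1 : g 1 = a 1 * (1 - x₀) ^ (-K) := rfl
  have hmul := mul_le_mul_of_nonneg_right hg1x (Real.rpow_nonneg hxx₀.le K)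
  rw [hgx, hg1] at hmul
  calc a 1 * (1 - x₀) ^ (-K) * (x - x₀) ^ K ≤ a x * (x - x₀) ^ (-K) * (x - x₀) ^ K := hmul
    _ = a x := by
        rw [mul_assoc, ← Real.rpow_add hxx₀]
        norm_num

lemma lower_left (a : ℝ → ℝ) (x₀ K : ℝ) (L : NNReal)
    (hx₀ : x₀ ∈ Set.Ioo (0:ℝ) 1)
    (hLip : LipschitzOnWith L a (Set.Icc 0 1))
    (hadiff : ∀ᵐ t ∂(volume.restrict (Set.Ioo (0:ℝ) 1)), DifferentiableAt ℝ a t)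
    (hK1 : 0 < K) (ha0 : a x₀ = 0)
    (hineq : ∀ᵐ x ∂(volume.restrict (Set.Icc (0:ℝ) 1)),
      (x - x₀) * deriv a x ≤ K * a x) :
    ∀ x ∈ Set.Ico 0 x₀, a 0 * x₀ ^ (-K) * (x₀ - x) ^ K ≤ a x := by
  intro x hx
  have hxx₀ : 0 < x₀ - x := sub_pos.2 hx.2
  have hx1 : x < 1 := lt_trans hx.2 hx₀.2
  set φ : ℝ → ℝ := fun t => (x₀ - t) ^ (-K) with hφ
  set g : ℝ → ℝ := fun t => a t * φ t with hg
  have hφd : ∀ t, t < x₀ → HasDerivAt φ (K * (x₀ - t) ^ (-K - 1)) t := by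
    intro t ht
    have h1 : HasDerivAt (fun s => x₀ - s) (-1) t := (hasDerivAt_id t).const_sub x₀
    have := h1.rpow_const (p := -K) (Or.inl (ne_of_gt (sub_pos.2 ht)))
    simpa using this
  have hsub1 : Set.Icc 0 x ⊆ Set.Icc 0 1 := Icc_subset_Icc le_rfl hx1.le
  have hφbound : ∀ t ∈ Set.Icc 0 x, (x₀ - t) ^ (-K - 1) ≤ (x₀ - x) ^ (-K - 1) := by
    intro t ht
    exact Real.rpow_le_rpow_of_nonpos hxx₀ (by linarith [ht.2]) (by linarith)
  have hφlip : LipschitzOnWith ⟨K * (x₀ - x) ^ (-K - 1), by positivity⟩ φ (Set.Icc 0 x) := by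
    apply Convex.lipschitzOnWith_of_nnnorm_hasDerivWithin_le (convex_Icc 0 x)
      (f' := fun t => K * (x₀ - t) ^ (-K - 1))
    · intro t ht
      exact (hφd t (lt_of_le_of_lt ht.2 hx.2)).hasDerivWithinAt
    · intro t ht
      refine NNReal.coe_le_coe.1 ?_
      show ‖K * (x₀ - t) ^ (-K - 1)‖ ≤ K * (x₀ - x) ^ (-K - 1)
      rw [Real.norm_eq_abs, abs_mul,
        abs_of_pos hK1, abs_of_pos (Real.rpow_pos_of_pos (by linarith [ht.2]) _)]
      exact mul_le_mul_of_nonneg_left (hφbound t ht) hK1.le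
  have haA : ∀ t ∈ Set.Icc 0 x, |a t| ≤ (L : ℝ) := by
    intro t ht
    have := hLip.dist_le_mul t (hsub1 ht) x₀ (Ioo_subset_Icc_self hx₀)
    rw [Real.dist_eq, Real.dist_eq, ha0, sub_zero] at this
    have habs : |t - x₀| ≤ 1 := by
      rw [abs_le]
      constructor <;> [nlinarith [ht.1, ht.2, hx₀.1, hx₀.2]; nlinarith [ht.1, ht.2, hx₀.1, hx₀.2]]
    nlinarith [this, habs, L.coe_nonneg]
  have hφB : ∀ t ∈ Set.Icc 0 x, |φ t| ≤ (x₀ - x) ^ (-K) := by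
    intro t ht
    rw [hφ, abs_of_pos (Real.rpow_pos_of_pos (by linarith [ht.2]) _)]
    exact Real.rpow_le_rpow_of_nonpos hxx₀ (by linarith [ht.2]) (by linarith)
  obtain ⟨C, hC⟩ := lipOnWith_mul (hLip.mono hsub1) hφlip haA hφB
  have hder : ∀ᵐ t ∂(volume.restrict (Set.Ioo (0:ℝ) x)), 0 ≤ deriv g t := by
    have hi' : ∀ᵐ t ∂(volume.restrict (Set.Ioo (0:ℝ) x)), (t - x₀) * deriv a t ≤ K * a t :=
      ae_restrict_of_ae_restrict_of_subset (Ioo_subset_Icc_self.trans hsub1) hineq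
    have hd' : ∀ᵐ t ∂(volume.restrict (Set.Ioo (0:ℝ) x)), DifferentiableAt ℝ a t :=
      ae_restrict_of_ae_restrict_of_subset (Ioo_subset_Ioo le_rfl hx1.le) hadiff
    filter_upwards [hi', hd', ae_restrict_mem measurableSet_Ioo] with t ht1 ht2 htm
    have htx₀ : t < x₀ := lt_trans htm.2 hx.2
    have htb : 0 < x₀ - t := sub_pos.2 htx₀
    have hdg : HasDerivAt g (deriv a t * φ t + a t * (K * (x₀ - t) ^ (-K - 1))) t :=
      ht2.hasDerivAt.mul (hφd t htx₀)
    rw [hdg.deriv]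
    have key : deriv a t * φ t + a t * (K * (x₀ - t) ^ (-K - 1)) =
        (x₀ - t) ^ (-K - 1) * ((x₀ - t) * deriv a t + K * a t) := by
      have h2 : φ t = (x₀ - t) ^ (-K - 1) * (x₀ - t) := by
        rw [hφ]
        rw [← Real.rpow_add_one (ne_of_gt htb) (-K - 1)]
        norm_num
      rw [h2]; ring
    rw [key]
    exact mul_nonneg (Real.rpow_nonneg htb.le _) (by linarith)
  have hg0x : g 0 ≤ g x := lipOn_deriv_nonneg hx.1 hC hder
  have hgx : g x = a x * (x₀ - x) ^ (-K) := rfl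
  have hg0 : g 0 = a 0 * (x₀ - 0) ^ (-K) := rfl
  have hmul := mul_le_mul_of_nonneg_right hg0x (Real.rpow_nonneg hxx₀.le K)
  rw [hgx, hg0, sub_zero] at hmul
  calc a 0 * x₀ ^ (-K) * (x₀ - x) ^ K ≤ a x * (x₀ - x) ^ (-K) * (x₀ - x) ^ K := hmul
    _ = a x := by
        rw [mul_assoc, ← Real.rpow_add hxx₀]
        norm_num

/-- Lemma 2.1.3: in the strongly degenerate case (a Lipschitz, K ∈ [1,2)),
`1/√a ∈ L¹(0,1)` but `1/a ∉ L¹(0,1)`. -/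
theorem stmt2 (a : ℝ → ℝ) (x₀ K : ℝ) (L : NNReal)
    (hx₀ : x₀ ∈ Set.Ioo (0:ℝ) 1)
    (hLip : LipschitzOnWith L a (Set.Icc 0 1))
    (ha0 : a x₀ = 0)
    (hpos : ∀ x ∈ Set.Icc (0:ℝ) 1, x ≠ x₀ → 0 < a x)
    (hK : K ∈ Set.Ico (1:ℝ) 2)
    (hineq : ∀ᵐ x ∂(MeasureTheory.volume.restrict (Set.Icc (0:ℝ) 1)),
      (x - x₀) * deriv a x ≤ K * a x) :
    MeasureTheory.IntegrableOn (fun x => 1 / Real.sqrt (a x)) (Set.Ioo 0 1) ∧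
    ¬ MeasureTheory.IntegrableOn (fun x => 1 / a x) (Set.Ioo 0 1) := by
  obtain ⟨hx₀0, hx₀1⟩ := hx₀
  have hK1 : (1:ℝ) ≤ K := hK.1
  have hK0 : (0:ℝ) < K := lt_of_lt_of_le one_pos hK1
  have hK2 : K < 2 := hK.2
  have ha1 : 0 < a 1 := hpos 1 ⟨zero_le_one, le_rfl⟩ (ne_of_gt hx₀1)
  have ha0' : 0 < a 0 := hpos 0 ⟨le_rfl, zero_le_one⟩ (ne_of_lt hx₀0)
  have hacont : ContinuousOn a (Set.Icc 0 1) := hLip.continuousOn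
  -- a.e. differentiability on Ioo 0 1
  have hadiff : ∀ᵐ t ∂(volume.restrict (Set.Ioo (0:ℝ) 1)), DifferentiableAt ℝ a t := by
    obtain ⟨A, hA, hAeq⟩ := hLip.extend_real
    rw [ae_restrict_iff' measurableSet_Ioo]
    filter_upwards [hA.ae_differentiableAt] with t ht htm
    have heq : a =ᶠ[nhds t] A := by
      filter_upwards [Ioo_mem_nhds htm.1 htm.2] with y hy
      exact hAeq (Ioo_subset_Icc_self hy)
    exact heq.differentiableAt_iff.2 ht
  have hlowR := lower_right a x₀ K L ⟨hx₀0, hx₀1⟩ hLip hadiff hK0 ha0 hineq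
  have hlowL := lower_left a x₀ K L ⟨hx₀0, hx₀1⟩ hLip hadiff hK0 ha0 hineq
  constructor
  · -- integrability of 1/√a
    set c₁ : ℝ := a 1 * (1 - x₀) ^ (-K) with hc₁
    set c₂ : ℝ := a 0 * x₀ ^ (-K) with hc₂
    have hc₁pos : 0 < c₁ := mul_pos ha1 (Real.rpow_pos_of_pos (by linarith) _)
    have hc₂pos : 0 < c₂ := mul_pos ha0' (Real.rpow_pos_of_pos hx₀0 _)
    have hexp : (-1:ℝ) < -(K/2) := by linarith
    -- right piece
    have hR : IntegrableOn (fun x => 1 / Real.sqrt (a x)) (Set.Ioo x₀ 1) := by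
      have hgint : IntegrableOn (fun x => (1 / Real.sqrt c₁) * (x - x₀) ^ (-(K/2))) (Set.Ioo x₀ 1) := by
        have h1 : IntervalIntegrable (fun x : ℝ => x ^ (-(K/2))) volume 0 (1 - x₀) :=
          intervalIntegrable_rpow' hexp
        have h2 := h1.comp_sub_right x₀
        have h3 : IntervalIntegrable (fun x : ℝ => (x - x₀) ^ (-(K/2))) volume x₀ 1 := by
          have he1 : (0:ℝ) + x₀ = x₀ := by ring
          have he2 : (1:ℝ) - x₀ + x₀ = 1 := by ring
          rwa [he1, he2] at h2
        exact ((intervalIntegrable_iff_integrableOn_Ioo_of_le hx₀1.le).1 h3).const_mul _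
      refine Integrable.mono' hgint ?_ ?_
      · -- measurability
        have hcont2 : ContinuousOn (fun x => 1 / Real.sqrt (a x)) (Set.Ioo x₀ 1) := by
          apply ContinuousOn.div continuousOn_const
          · exact Real.continuous_sqrt.comp_continuousOn
              (hacont.mono (fun y hy => ⟨by linarith [hy.1], hy.2.le⟩))
          · intro y hy
            exact Real.sqrt_ne_zero'.2 (hpos y ⟨by linarith [hy.1], hy.2.le⟩ (ne_of_gt hy.1))
        exact hcont2.aestronglyMeasurable measurableSet_Ioo
      · rw [ae_restrict_iff' measurableSet_Ioo]
        filter_upwards with x hx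
        have hb : 0 < x - x₀ := sub_pos.2 hx.1
        have hax : 0 < a x := hpos x ⟨by linarith [hx.1], hx.2.le⟩ (ne_of_gt hx.1)
        have hlow := hlowR x ⟨hx.1, hx.2.le⟩
        have hs1 : Real.sqrt (c₁ * (x - x₀) ^ K) ≤ Real.sqrt (a x) :=
          Real.sqrt_le_sqrt hlow
        have hs2 : Real.sqrt (c₁ * (x - x₀) ^ K) = Real.sqrt c₁ * (x - x₀) ^ (K/2) := by
          rw [Real.sqrt_mul hc₁pos.le, Real.sqrt_eq_rpow ((x - x₀) ^ K),
            ← Real.rpow_mul hb.le, show K * (1/2) = K/2 by ring]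
        have hspos : 0 < Real.sqrt c₁ * (x - x₀) ^ (K/2) :=
          mul_pos (Real.sqrt_pos.2 hc₁pos) (Real.rpow_pos_of_pos hb _)
        rw [Real.norm_eq_abs, abs_of_pos (by positivity)]
        calc 1 / Real.sqrt (a x) ≤ 1 / (Real.sqrt c₁ * (x - x₀) ^ (K/2)) := by
              apply one_div_le_one_div_of_le hspos
              rw [← hs2]; exact hs1
          _ = (1 / Real.sqrt c₁) * (x - x₀) ^ (-(K/2)) := by
              rw [Real.rpow_neg hb.le]
              field_simp
    -- left piece
    have hL : IntegrableOn (fun x => 1 / Real.sqrt (a x)) (Set.Ioo 0 x₀) := by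
      have hgint : IntegrableOn (fun x => (1 / Real.sqrt c₂) * (x₀ - x) ^ (-(K/2))) (Set.Ioo 0 x₀) := by
        have h1 : IntervalIntegrable (fun x : ℝ => x ^ (-(K/2))) volume 0 x₀ :=
          intervalIntegrable_rpow' hexp
        have h2 := (h1.comp_sub_left x₀).symm
        have h3 : IntervalIntegrable (fun x : ℝ => (x₀ - x) ^ (-(K/2))) volume 0 x₀ := by
          have he1 : x₀ - (0:ℝ) = x₀ := by ring
          have he2 : x₀ - x₀ = (0:ℝ) := by ring
          rwa [he1, he2] at h2
        exact ((intervalIntegrable_iff_integrableOn_Ioo_of_le hx₀0.le).1 h3).const_mul _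
      refine Integrable.mono' hgint ?_ ?_
      · have hcont2 : ContinuousOn (fun x => 1 / Real.sqrt (a x)) (Set.Ioo 0 x₀) := by
          apply ContinuousOn.div continuousOn_const
          · exact Real.continuous_sqrt.comp_continuousOn
              (hacont.mono (fun y hy => ⟨hy.1.le, by linarith [hy.2]⟩))
          · intro y hy
            exact Real.sqrt_ne_zero'.2 (hpos y ⟨hy.1.le, by linarith [hy.2]⟩ (ne_of_lt hy.2))
        exact hcont2.aestronglyMeasurable measurableSet_Ioo
      · rw [ae_restrict_iff' measurableSet_Ioo]
        filter_upwards with x hx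
        have hb : 0 < x₀ - x := sub_pos.2 hx.2
        have hax : 0 < a x := hpos x ⟨hx.1.le, by linarith [hx.2]⟩ (ne_of_lt hx.2)
        have hlow := hlowL x ⟨hx.1.le, hx.2⟩
        have hs1 : Real.sqrt (c₂ * (x₀ - x) ^ K) ≤ Real.sqrt (a x) :=
          Real.sqrt_le_sqrt hlow
        have hs2 : Real.sqrt (c₂ * (x₀ - x) ^ K) = Real.sqrt c₂ * (x₀ - x) ^ (K/2) := by
          rw [Real.sqrt_mul hc₂pos.le, Real.sqrt_eq_rpow ((x₀ - x) ^ K),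
            ← Real.rpow_mul hb.le, show K * (1/2) = K/2 by ring]
        have hspos : 0 < Real.sqrt c₂ * (x₀ - x) ^ (K/2) :=
          mul_pos (Real.sqrt_pos.2 hc₂pos) (Real.rpow_pos_of_pos hb _)
        rw [Real.norm_eq_abs, abs_of_pos (by positivity)]
        calc 1 / Real.sqrt (a x) ≤ 1 / (Real.sqrt c₂ * (x₀ - x) ^ (K/2)) := by
              apply one_div_le_one_div_of_le hspos
              rw [← hs2]; exact hs1
          _ = (1 / Real.sqrt c₂) * (x₀ - x) ^ (-(K/2)) := by
              rw [Real.rpow_neg hb.le]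
              field_simp
    -- combine
    have hpt : IntegrableOn (fun x => 1 / Real.sqrt (a x)) {x₀} := by
      rw [IntegrableOn, Measure.restrict_eq_zero.2 (measure_singleton x₀)]
      exact integrable_zero_measure
    have hsub : Set.Ioo (0:ℝ) 1 ⊆ {x₀} ∪ (Set.Ioo 0 x₀ ∪ Set.Ioo x₀ 1) := by
      intro y hy
      rcases lt_trichotomy y x₀ with h | h | h
      · exact Or.inr (Or.inl ⟨hy.1, h⟩)
      · exact Or.inl (by simp [h])
      · exact Or.inr (Or.inr ⟨h, hy.2⟩)
    exact (hpt.union (hL.union hR)).mono_set hsub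
  · intro hcon
    have h2 : IntegrableOn (fun x => 1 / a x) (Set.Ioo x₀ 1) :=
      hcon.mono_set (Ioo_subset_Ioo hx₀0.le le_rfl)
    have hL1 : a 1 ≤ (L:ℝ) * (1 - x₀) := by
      have := hLip.dist_le_mul 1 ⟨zero_le_one, le_rfl⟩ x₀ ⟨hx₀0.le, hx₀1.le⟩
      rw [Real.dist_eq, Real.dist_eq, ha0, sub_zero, abs_of_pos ha1,
        abs_of_pos (by linarith : (0:ℝ) < 1 - x₀)] at this
      exact this
    have hLpos : 0 < (L:ℝ) := by nlinarith
    have haub : ∀ x ∈ Set.Ioo x₀ 1, a x ≤ (L:ℝ) * (x - x₀) := by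
      intro x hx
      have := hLip.dist_le_mul x ⟨by linarith [hx.1], hx.2.le⟩ x₀ ⟨hx₀0.le, hx₀1.le⟩
      rw [Real.dist_eq, Real.dist_eq, ha0, sub_zero,
        abs_of_pos (hpos x ⟨by linarith [hx.1], hx.2.le⟩ (ne_of_gt hx.1)),
        abs_of_pos (sub_pos.2 hx.1)] at this
      exact this
    have hgi : IntegrableOn (fun x => (x - x₀)⁻¹) (Set.Ioo x₀ 1) := by
      refine Integrable.mono' (h2.const_mul (L:ℝ)) ?_ ?_
      · have hcont2 : ContinuousOn (fun x : ℝ => (x - x₀)⁻¹) (Set.Ioo x₀ 1) := by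
          apply ContinuousOn.inv₀ (by fun_prop)
          intro y hy
          have : 0 < y - x₀ := sub_pos.2 hy.1
          exact ne_of_gt this
        exact hcont2.aestronglyMeasurable measurableSet_Ioo
      · rw [ae_restrict_iff' measurableSet_Ioo]
        filter_upwards with x hx
        have hb : 0 < x - x₀ := sub_pos.2 hx.1
        have hax : 0 < a x := hpos x ⟨by linarith [hx.1], hx.2.le⟩ (ne_of_gt hx.1)
        rw [Real.norm_eq_abs, abs_of_pos (inv_pos.2 hb), ← one_div, mul_one_div]
        rw [div_le_div_iff₀ hb hax]
        have := haub x hx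
        nlinarith
    have h5 : IntervalIntegrable (fun x => (x - x₀)⁻¹) volume x₀ 1 :=
      (intervalIntegrable_iff_integrableOn_Ioo_of_le hx₀1.le).2 hgi
    have h6 := h5.comp_add_right x₀
    simp only [add_sub_cancel_right, sub_self] at h6
    have h7 : IntegrableOn (fun x : ℝ => x⁻¹) (Set.Ioo 0 (1 - x₀)) :=
      (intervalIntegrable_iff_integrableOn_Ioo_of_le (by linarith)).1 h6
    have h8 : IntegrableOn (fun x : ℝ => x ^ (-1 : ℝ)) (Set.Ioo 0 (1 - x₀)) := by
      refine h7.congr_fun ?_ measurableSet_Ioo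
      intro x hx
      exact (Real.rpow_neg_one x).symm
    rw [integrableOn_Ioo_rpow_iff (by linarith)] at h8
    linarith
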